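/- Under the hypotheses of the smooth case (β-smoothness of each u_i on B(θ,d), ‖∇L(θ)‖₂ ≤ ε, d as given), θ is (d,k)-pseudo core-stable: there is no θ' with ‖θ'−θ‖₂ < d and nonempty coalition S ⊆ [n] such that (|S|/(kn))·u_i(θ') ≥ u_i(θ) for all i ∈ S with at least one strict inequality. -/

import Mathlib

set_option maxHeartbeats 1000000

/-- Under the hypotheses of the smooth case, `θ` is `(d,k)`-pseudo core-stable:
there is no `θ'` within distance `d` and nonempty coalition `S` with
`(|S|/(k·n))·u i θ' ≥ u i θ` for all `i ∈ S` with at least one strict inequality. -/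
theorem smooth_approx_stationary_pseudo_core_stable
    {p : ℕ} (n : ℕ) (u : Fin n → EuclideanSpace ℝ (Fin p) → ℝ)
    (hpos : ∀ i θ, 0 < u i θ)
    (hdiff : ∀ i, Differentiable ℝ (u i))
    (β k ε d : ℝ) (hβ : 0 < β) (hk : 1 < k) (hε : 0 ≤ ε)
    (θ : EuclideanSpace ℝ (Fin p))
    (hsmooth : ∀ i, ∀ θ' : EuclideanSpace ℝ (Fin p), ‖θ' - θ‖ ≤ d →
      u i θ' ≤ u i θ + inner ℝ (gradient (u i) θ) (θ' - θ) + β / 2 * ‖θ' - θ‖ ^ 2)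
    (hgrad : ‖∑ i : Fin n, (u i θ)⁻¹ • gradient (u i) θ‖ ≤ ε)
    (hd : d = (-ε + Real.sqrt (ε ^ 2 + 2 * β * (k - 1) * n * ∑ i : Fin n, (u i θ)⁻¹)) /
      (β * ∑ i : Fin n, (u i θ)⁻¹)) :
    ¬ ∃ θ' : EuclideanSpace ℝ (Fin p), ‖θ' - θ‖ < d ∧
      ∃ S : Finset (Fin n), S.Nonempty ∧
        (∀ i ∈ S, (S.card : ℝ) / (k * n) * u i θ' ≥ u i θ) ∧
        (∃ i ∈ S, (S.card : ℝ) / (k * n) * u i θ' > u i θ) := by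
  rintro ⟨θ', hθ', S, hSne, hall, i₀, hi₀, hstrict⟩
  have hn : 0 < n := (hSne.choose).pos
  set δ : EuclideanSpace ℝ (Fin p) := θ' - θ with hδ
  set t : ℝ := ‖δ‖ with htdef
  have ht0 : 0 ≤ t := norm_nonneg _
  set U : ℝ := ∑ i : Fin n, (u i θ)⁻¹ with hUdef
  have hUpos : 0 < U :=
    Finset.sum_pos (fun i _ => inv_pos.2 (hpos i θ)) ⟨⟨0, hn⟩, Finset.mem_univ _⟩
  have hcard : (0:ℝ) < S.card := by exact_mod_cast Finset.card_pos.2 hSne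
  have hkn : (0:ℝ) < k * n := by
    have : (0:ℝ) < n := by exact_mod_cast hn
    nlinarith
  -- pointwise lower bound on normalized utilities over S
  have key : ∀ i ∈ S, (k*n)/(S.card:ℝ) ≤ (u i θ)⁻¹ * u i θ' := by
    intro i hi
    have h := hall i hi
    have hui := hpos i θ
    have h2 : k*n*u i θ ≤ (S.card:ℝ) * u i θ' := by
      rw [ge_iff_le, div_mul_eq_mul_div, le_div_iff₀ hkn] at h
      linarith
    rw [div_le_iff₀ hcard]
    have h3 := mul_le_mul_of_nonneg_left h2 (inv_pos.2 hui).le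
    have h4 : (u i θ)⁻¹ * u i θ = 1 := inv_mul_cancel₀ hui.ne'
    nlinarith
  have keystrict : (k*n)/(S.card:ℝ) < (u i₀ θ)⁻¹ * u i₀ θ' := by
    have h := hstrict
    have hui := hpos i₀ θ
    have h2 : k*n*u i₀ θ < (S.card:ℝ) * u i₀ θ' := by
      rw [gt_iff_lt, div_mul_eq_mul_div, lt_div_iff₀ hkn] at h
      linarith
    rw [div_lt_iff₀ hcard]
    have h3 := mul_lt_mul_of_pos_left h2 (inv_pos.2 hui)
    have h4 : (u i₀ θ)⁻¹ * u i₀ θ = 1 := inv_mul_cancel₀ hui.ne'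
    nlinarith
  -- sum over S is > kn
  have h1 : k * n < ∑ i ∈ S, (u i θ)⁻¹ * u i θ' := by
    have hlt : ∑ i ∈ S, (k*n)/(S.card:ℝ) < ∑ i ∈ S, (u i θ)⁻¹ * u i θ' :=
      Finset.sum_lt_sum key ⟨i₀, hi₀, keystrict⟩
    have hc : ∑ _i ∈ S, (k*n)/(S.card:ℝ) = k * n := by
      rw [Finset.sum_const, nsmul_eq_mul]
      field_simp
    linarith [hc ▸ hlt]
  -- smoothness consequences, normalized
  have hA : ∀ i : Fin n, (u i θ)⁻¹ * u i θ' ≤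
      1 + (u i θ)⁻¹ * (inner ℝ (gradient (u i) θ) δ : ℝ) + (u i θ)⁻¹ * (β/2 * t^2) := by
    intro i
    have hs := hsmooth i θ' hθ'.le
    have hui := hpos i θ
    have h3 := mul_le_mul_of_nonneg_left hs (inv_pos.2 hui).le
    have h4 : (u i θ)⁻¹ * u i θ = 1 := inv_mul_cancel₀ hui.ne'
    nlinarith
  have hB : ∀ i : Fin n, -((u i θ)⁻¹ * (inner ℝ (gradient (u i) θ) δ : ℝ)) ≤
      1 + (u i θ)⁻¹ * (β/2 * t^2) := by
    intro i
    have := hA i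
    have hpos' : 0 < (u i θ)⁻¹ * u i θ' := mul_pos (inv_pos.2 (hpos i θ)) (hpos i θ')
    linarith
  -- Cauchy–Schwarz bound on the total gradient term
  have hip : ∑ i : Fin n, (u i θ)⁻¹ * (inner ℝ (gradient (u i) θ) δ : ℝ) ≤ ε * t := by
    have heq : ∑ i : Fin n, (u i θ)⁻¹ * (inner ℝ (gradient (u i) θ) δ : ℝ)
        = (inner ℝ (∑ i : Fin n, (u i θ)⁻¹ • gradient (u i) θ) δ : ℝ) := by
      rw [sum_inner]
      exact Finset.sum_congr rfl fun i _ => (real_inner_smul_left _ _ _).symm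
    rw [heq]
    calc (inner ℝ (∑ i : Fin n, (u i θ)⁻¹ • gradient (u i) θ) δ : ℝ)
        ≤ ‖∑ i : Fin n, (u i θ)⁻¹ • gradient (u i) θ‖ * ‖δ‖ := real_inner_le_norm _ _
      _ ≤ ε * t := mul_le_mul_of_nonneg_right hgrad ht0
  -- sum splitting
  have hsplitA : ∑ i ∈ S, (u i θ)⁻¹ + ∑ i ∈ Sᶜ, (u i θ)⁻¹ = U :=
    Finset.sum_add_sum_compl S _
  have hsplitG : ∑ i ∈ S, (u i θ)⁻¹ * (inner ℝ (gradient (u i) θ) δ : ℝ)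
      + ∑ i ∈ Sᶜ, (u i θ)⁻¹ * (inner ℝ (gradient (u i) θ) δ : ℝ)
      = ∑ i : Fin n, (u i θ)⁻¹ * (inner ℝ (gradient (u i) θ) δ : ℝ) :=
    Finset.sum_add_sum_compl S _
  have hcardc : ((Sᶜ : Finset (Fin n)).card : ℝ) = (n : ℝ) - S.card := by
    have h := Finset.card_compl S
    have hle := Finset.card_le_univ S
    rw [h]
    simp only [Fintype.card_fin] at *
    push_cast [Nat.cast_sub hle]
    ring
  -- bound sum over S via hA
  have h2 : ∑ i ∈ S, (u i θ)⁻¹ * u i θ' ≤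
      (S.card : ℝ) + (∑ i ∈ S, (u i θ)⁻¹ * (inner ℝ (gradient (u i) θ) δ : ℝ))
        + β/2 * t^2 * ∑ i ∈ S, (u i θ)⁻¹ := by
    have := Finset.sum_le_sum (fun i (_ : i ∈ S) => hA i)
    simp only [Finset.sum_add_distrib, Finset.sum_const, nsmul_eq_mul, mul_one] at this
    rw [Finset.mul_sum]
    calc ∑ i ∈ S, (u i θ)⁻¹ * u i θ' ≤ _ := this
      _ = (S.card : ℝ) + (∑ i ∈ S, (u i θ)⁻¹ * (inner ℝ (gradient (u i) θ) δ : ℝ))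
          + ∑ i ∈ S, β/2 * t^2 * (u i θ)⁻¹ := by
        congr 1
        rw [← Finset.sum_congr rfl (fun i _ => mul_comm ((u i θ)⁻¹) (β/2 * t^2))]
    -- done
  -- bound sum over complement via hB
  have h3 : -(∑ i ∈ Sᶜ, (u i θ)⁻¹ * (inner ℝ (gradient (u i) θ) δ : ℝ)) ≤
      ((n : ℝ) - S.card) + β/2 * t^2 * ∑ i ∈ Sᶜ, (u i θ)⁻¹ := by
    have := Finset.sum_le_sum (fun i (_ : i ∈ Sᶜ) => hB i)
    rw [Finset.sum_neg_distrib] at this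
    simp only [Finset.sum_add_distrib, Finset.sum_const, nsmul_eq_mul, mul_one] at this
    rw [Finset.mul_sum, ← hcardc]
    calc -(∑ i ∈ Sᶜ, (u i θ)⁻¹ * (inner ℝ (gradient (u i) θ) δ : ℝ)) ≤ _ := this
      _ = ((Sᶜ : Finset (Fin n)).card : ℝ) + ∑ i ∈ Sᶜ, β/2 * t^2 * (u i θ)⁻¹ := by
        congr 1
        exact Finset.sum_congr rfl (fun i _ => mul_comm ((u i θ)⁻¹) (β/2 * t^2))
  -- main inequality
  have hmain : (k - 1) * n < ε * t + β/2 * U * t^2 := by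
    have hS2 : β/2 * t^2 * (∑ i ∈ S, (u i θ)⁻¹) + β/2 * t^2 * (∑ i ∈ Sᶜ, (u i θ)⁻¹)
        = β/2 * U * t^2 := by rw [← mul_add, hsplitA]; ring
    linarith [h1, h2, h3, hip, hsplitG, hS2]
  -- d is the positive root of the quadratic
  set s : ℝ := Real.sqrt (ε ^ 2 + 2 * β * (k - 1) * n * U) with hsdef
  have hk1 : (0:ℝ) ≤ k - 1 := by linarith
  have hn' : (0:ℝ) ≤ n := Nat.cast_nonneg n
  have haux : (0:ℝ) ≤ 2 * β * (k - 1) * n * U :=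
    mul_nonneg (mul_nonneg (mul_nonneg (by linarith) hk1) hn') hUpos.le
  have hnn : (0:ℝ) ≤ ε ^ 2 + 2 * β * (k - 1) * n * U := by positivity
  have hs2 : s ^ 2 = ε ^ 2 + 2 * β * (k - 1) * n * U := Real.sq_sqrt hnn
  have hsε : ε ≤ s := by
    have h1' : ε = Real.sqrt (ε ^ 2) := by
      rw [Real.sqrt_sq hε]
    rw [h1']
    apply Real.sqrt_le_sqrt
    linarith
  have hβU : (0:ℝ) < β * U := mul_pos hβ hUpos
  have hdval : β * U * d = s - ε := by
    rw [hd]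
    field_simp
    ring
  have hroot : ε * d + β/2 * U * d^2 = (k - 1) * n := by
    have h := hs2
    nlinarith [hdval, hs2, hβU]
  -- conclude: t < d gives the quadratic below (k-1)n
  have htd : t < d := hθ'
  have hq : β/2 * U * (t*t) ≤ β/2 * U * (d*d) :=
    mul_le_mul_of_nonneg_left (mul_self_le_mul_self ht0 htd.le) (by positivity)
  nlinarith [hmain, hroot, mul_le_mul_of_nonneg_left htd.le hε, hq]
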